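/- In a linear structural equation model where treatments have no direct path to the outcome, ordinary least squares / MLE coefficients on treatment are biased by collider stratification: in the model X1 = αU·U + αA·A0 + ε1, A1 = γX·X1 + γA·A0 + η1, I1 = βA·A1 + βX·X1 + βU·U + ζ1 with all noises and U independent mean-zero, the coefficient of A1 in the best linear predictor of I1 given (A1, X1, A0) equals βA, but the coefficient of A1 in the best linear predictor of I1 given only (A1, X1) differs from βA whenever βU·αA·αU ≠ 0 and appropriate nondegeneracy holds. -/

import Mathlib

open MeasureTheory ProbabilityTheory

set_option maxHeartbeats 2000000 in
/-- Collider-stratification (phantom) bias of least squares. In the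
linear structural model
`X1 = αU·U + αA·A0 + ε1`, `A1 = γX·X1 + γA·A0 + η1`,
`I1 = βA·A1 + βX·X1 + βU·U + ζ1`,
with `U, A0, ε1, η1, ζ1` independent, mean zero, in L², with strictly positive
variances, the coefficient of `A1` in the (population) best linear predictor of
`I1` given `(A1, X1, A0)` equals `βA`; but any best-linear-predictor coefficient
of `A1` given only `(A1, X1)` differs from `βA` whenever `βU·αA·αU ≠ 0` (and the
nondegeneracy condition `γA ≠ 0` holds). -/
theorem stmt_19 {Ω : Type*} [MeasurableSpace Ω] (μ : Measure Ω) [IsProbabilityMeasure μ]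
    (U A0 ε1 η1 ζ1 : Ω → ℝ)
    (αU αA γX γA βA βX βU : ℝ)
    (X1 A1 I1 : Ω → ℝ)
    -- independence of the exogenous variables
    (hindep : iIndepFun ![U, A0, ε1, η1, ζ1] μ)
    -- measurability and square integrability
    (hUm : Measurable U) (hA0m : Measurable A0) (hε1m : Measurable ε1)
    (hη1m : Measurable η1) (hζ1m : Measurable ζ1)
    (hU2 : MemLp U 2 μ) (hA02 : MemLp A0 2 μ) (hε12 : MemLp ε1 2 μ)
    (hη12 : MemLp η1 2 μ) (hζ12 : MemLp ζ1 2 μ)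
    -- mean zero
    (hUmean : ∫ ω, U ω ∂μ = 0) (hA0mean : ∫ ω, A0 ω ∂μ = 0)
    (hε1mean : ∫ ω, ε1 ω ∂μ = 0) (hη1mean : ∫ ω, η1 ω ∂μ = 0)
    (hζ1mean : ∫ ω, ζ1 ω ∂μ = 0)
    -- strictly positive variances (nondegeneracy)
    (hUvar : 0 < ∫ ω, (U ω) ^ 2 ∂μ) (hA0var : 0 < ∫ ω, (A0 ω) ^ 2 ∂μ)
    (hε1var : 0 < ∫ ω, (ε1 ω) ^ 2 ∂μ) (hη1var : 0 < ∫ ω, (η1 ω) ^ 2 ∂μ)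
    (hζ1var : 0 < ∫ ω, (ζ1 ω) ^ 2 ∂μ)
    -- the structural equations
    (hX1 : ∀ ω, X1 ω = αU * U ω + αA * A0 ω + ε1 ω)
    (hA1 : ∀ ω, A1 ω = γX * X1 ω + γA * A0 ω + η1 ω)
    (hI1 : ∀ ω, I1 ω = βA * A1 ω + βX * X1 ω + βU * U ω + ζ1 ω) :
    -- (1) regressing I1 on (A1, X1, A0): the A1-coefficient is βA
    (∀ b1 b2 b3 : ℝ,
      (∫ ω, (I1 ω - b1 * A1 ω - b2 * X1 ω - b3 * A0 ω) * A1 ω ∂μ = 0) →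
      (∫ ω, (I1 ω - b1 * A1 ω - b2 * X1 ω - b3 * A0 ω) * X1 ω ∂μ = 0) →
      (∫ ω, (I1 ω - b1 * A1 ω - b2 * X1 ω - b3 * A0 ω) * A0 ω ∂μ = 0) →
      b1 = βA) ∧
    -- (2) regressing I1 on (A1, X1) only: the A1-coefficient is biased
    (βU * αA * αU ≠ 0 → γA ≠ 0 →
      ∀ c1 c2 : ℝ,
        (∫ ω, (I1 ω - c1 * A1 ω - c2 * X1 ω) * A1 ω ∂μ = 0) →
        (∫ ω, (I1 ω - c1 * A1 ω - c2 * X1 ω) * X1 ω ∂μ = 0) →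
        c1 ≠ βA) := by

  -- the five exogenous variables as a vector
  set f : Fin 5 → Ω → ℝ := ![U, A0, ε1, η1, ζ1] with hf
  have h2 : ∀ i, MemLp (f i) 2 μ := by
    intro i; fin_cases i <;> simpa [hf] using ‹_›
  have hm : ∀ i, Measurable (f i) := by
    intro i; fin_cases i <;> simpa [hf] using ‹_›
  have hmean : ∀ i, ∫ ω, f i ω ∂μ = 0 := by
    intro i; fin_cases i <;> simpa [hf] using ‹_›
  have hint : ∀ i j, Integrable (fun ω => f i ω * f j ω) μ := by
    intro i j
    by_cases hij : i = j
    · subst hij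
      simpa [sq] using (h2 i).integrable_sq
    · exact (hindep.indepFun hij).integrable_mul ((h2 i).integrable one_le_two)
        ((h2 j).integrable one_le_two)
  have hIJ : ∀ i j, ∫ ω, f i ω * f j ω ∂μ = if i = j then (∫ ω, (f i ω)^2 ∂μ) else 0 := by
    intro i j
    by_cases hij : i = j
    · subst hij; simp [sq]
    · have h := (hindep.indepFun hij).integral_mul_eq_mul_integral (hm i).aestronglyMeasurable
        (hm j).aestronglyMeasurable
      simp only [hij, if_neg]
      calc ∫ ω, f i ω * f j ω ∂μ = ∫ ω, (f i * f j) ω ∂μ := rfl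
        _ = (∫ ω, f i ω ∂μ) * ∫ ω, f j ω ∂μ := h
        _ = 0 := by rw [hmean i, hmean j]; ring
  have key : ∀ a₀ a₁ a₂ a₃ a₄ b₀ b₁ b₂ b₃ b₄ : ℝ,
      ∫ ω, (a₀ * U ω + a₁ * A0 ω + a₂ * ε1 ω + a₃ * η1 ω + a₄ * ζ1 ω) *
           (b₀ * U ω + b₁ * A0 ω + b₂ * ε1 ω + b₃ * η1 ω + b₄ * ζ1 ω) ∂μ
        = a₀*b₀*(∫ ω, (U ω)^2 ∂μ) + a₁*b₁*(∫ ω, (A0 ω)^2 ∂μ) + a₂*b₂*(∫ ω, (ε1 ω)^2 ∂μ)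
          + a₃*b₃*(∫ ω, (η1 ω)^2 ∂μ) + a₄*b₄*(∫ ω, (ζ1 ω)^2 ∂μ) := by
    intro a₀ a₁ a₂ a₃ a₄ b₀ b₁ b₂ b₃ b₄
    set p : Fin 5 → ℝ := ![a₀, a₁, a₂, a₃, a₄] with hp
    set q : Fin 5 → ℝ := ![b₀, b₁, b₂, b₃, b₄] with hq
    have step1 : ∫ ω, (a₀ * U ω + a₁ * A0 ω + a₂ * ε1 ω + a₃ * η1 ω + a₄ * ζ1 ω) *
           (b₀ * U ω + b₁ * A0 ω + b₂ * ε1 ω + b₃ * η1 ω + b₄ * ζ1 ω) ∂μ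
        = ∫ ω, ∑ i : Fin 5, ∑ j : Fin 5, (p i * q j) * (f i ω * f j ω) ∂μ := by
      refine integral_congr_ae (Filter.Eventually.of_forall fun ω => ?_)
      simp only [hf, hp, hq, Fin.sum_univ_five, Matrix.cons_val_zero, Matrix.cons_val_one,
        Matrix.head_cons, Matrix.cons_val_two, Matrix.tail_cons, Matrix.cons_val_three,
        Matrix.cons_val_four]
      ring
    rw [step1, integral_finset_sum _ (fun i _ => integrable_finset_sum _
      (fun j _ => (hint i j).const_mul _))]
    have hrow : ∀ i : Fin 5, (∫ ω, ∑ j : Fin 5, (p i * q j) * (f i ω * f j ω) ∂μ)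
        = p i * q i * ∫ ω, (f i ω)^2 ∂μ := by
      intro i
      rw [integral_finset_sum _ (fun j _ => (hint i j).const_mul _)]
      have hterm : ∀ j : Fin 5, (∫ ω, (p i * q j) * (f i ω * f j ω) ∂μ)
          = (p i * q j) * if i = j then (∫ ω, (f i ω)^2 ∂μ) else 0 := by
        intro j; rw [integral_const_mul, hIJ]
      rw [Finset.sum_congr rfl (fun j _ => hterm j), Finset.sum_eq_single i]
      · simp
      · intro j _ hji; simp [Ne.symm hji]
      · intro h; exact absurd (Finset.mem_univ i) h
    rw [Finset.sum_congr rfl (fun i _ => hrow i)]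
    simp only [Fin.sum_univ_five, hp, hq, hf, Matrix.cons_val_zero, Matrix.cons_val_one,
      Matrix.head_cons, Matrix.cons_val_two, Matrix.tail_cons, Matrix.cons_val_three,
      Matrix.cons_val_four]
  set mU := ∫ ω, (U ω)^2 ∂μ with hmU
  set mA := ∫ ω, (A0 ω)^2 ∂μ with hmA
  set mE := ∫ ω, (ε1 ω)^2 ∂μ with hmE
  set mH := ∫ ω, (η1 ω)^2 ∂μ with hmH
  set mZ := ∫ ω, (ζ1 ω)^2 ∂μ with hmZ
  constructor
  · -- part (1)
    intro b1 b2 b3 e1 e2 e3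
    have e1' : ((βA-b1)*(γX*αU) + (βX-b2)*αU + βU)*(γX*αU)*mU
        + ((βA-b1)*(γX*αA+γA) + (βX-b2)*αA - b3)*(γX*αA+γA)*mA
        + ((βA-b1)*γX + (βX-b2))*γX*mE + (βA-b1)*1*mH + 1*0*mZ = 0 := by
      rw [← key ((βA-b1)*(γX*αU) + (βX-b2)*αU + βU)
        ((βA-b1)*(γX*αA+γA) + (βX-b2)*αA - b3) ((βA-b1)*γX + (βX-b2)) (βA-b1) 1
        (γX*αU) (γX*αA+γA) γX 1 0]
      exact (integral_congr_ae (Filter.Eventually.of_forall fun ω => by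
        simp only [hI1, hA1, hX1]; ring)).trans e1
    have e2' : ((βA-b1)*(γX*αU) + (βX-b2)*αU + βU)*αU*mU
        + ((βA-b1)*(γX*αA+γA) + (βX-b2)*αA - b3)*αA*mA
        + ((βA-b1)*γX + (βX-b2))*1*mE + (βA-b1)*0*mH + 1*0*mZ = 0 := by
      rw [← key ((βA-b1)*(γX*αU) + (βX-b2)*αU + βU)
        ((βA-b1)*(γX*αA+γA) + (βX-b2)*αA - b3) ((βA-b1)*γX + (βX-b2)) (βA-b1) 1
        αU αA 1 0 0]
      exact (integral_congr_ae (Filter.Eventually.of_forall fun ω => by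
        simp only [hI1, hA1, hX1]; ring)).trans e2
    have e3' : ((βA-b1)*(γX*αU) + (βX-b2)*αU + βU)*0*mU
        + ((βA-b1)*(γX*αA+γA) + (βX-b2)*αA - b3)*1*mA
        + ((βA-b1)*γX + (βX-b2))*0*mE + (βA-b1)*0*mH + 1*0*mZ = 0 := by
      rw [← key ((βA-b1)*(γX*αU) + (βX-b2)*αU + βU)
        ((βA-b1)*(γX*αA+γA) + (βX-b2)*αA - b3) ((βA-b1)*γX + (βX-b2)) (βA-b1) 1
        0 1 0 0 0]
      exact (integral_congr_ae (Filter.Eventually.of_forall fun ω => by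
        simp only [hI1, hA1, hX1]; ring)).trans e3
    have h4 : mH * (βA - b1) = 0 := by linear_combination e1' - γX * e2' - γA * e3'
    rcases mul_eq_zero.mp h4 with h | h
    · exact absurd h (ne_of_gt hη1var)
    · linarith
  · -- part (2)
    intro hβ hγ c1 c2 e1 e2 hc
    subst hc
    have e1' : ((βX-c2)*αU + βU)*(γX*αU)*mU + ((βX-c2)*αA)*(γX*αA+γA)*mA
        + (βX-c2)*γX*mE + 0*1*mH + 1*0*mZ = 0 := by
      rw [← key ((βX-c2)*αU + βU) ((βX-c2)*αA) (βX-c2) 0 1 (γX*αU) (γX*αA+γA) γX 1 0]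
      exact (integral_congr_ae (Filter.Eventually.of_forall fun ω => by
        simp only [hI1, hA1, hX1]; ring)).trans e1
    have e2' : ((βX-c2)*αU + βU)*αU*mU + ((βX-c2)*αA)*αA*mA
        + (βX-c2)*1*mE + 0*0*mH + 1*0*mZ = 0 := by
      rw [← key ((βX-c2)*αU + βU) ((βX-c2)*αA) (βX-c2) 0 1 αU αA 1 0 0]
      exact (integral_congr_ae (Filter.Eventually.of_forall fun ω => by
        simp only [hI1, hA1, hX1]; ring)).trans e2
    have h1 : γA * ((βX - c2) * αA) * mA = 0 := by linear_combination e1' - γX * e2'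
    have h2 : (βX - c2) * αA = 0 := by
      rcases mul_eq_zero.mp h1 with h | h
      · rcases mul_eq_zero.mp h with h' | h'
        · exact absurd h' hγ
        · exact h'
      · exact absurd h (ne_of_gt hA0var)
    have h3 : βU * αA * αU * mU = 0 := by
      linear_combination αA * e2' - (αU^2*mU + αA^2*mA + mE) * h2
    rcases mul_eq_zero.mp h3 with h | h
    · exact hβ h
    · exact absurd h (ne_of_gt hUvar)
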